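/- Let H ∈ 𝕊^d_{++} and let Q₀ ⪰ H. Define Q_{k+1} = SR1(Q_k, H, u_k) with any choice of u_k satisfying (Q_k − H)u_k ≠ 0 whenever Q_k ≠ H (and Q_{k+1} = Q_k otherwise). Then the sequence tr(Q_k − H) is nonincreasing, and tr(Q_{k+1} − H) ≤ tr(Q_k − H) − λ where λ = ((Q_k−H)u_k)ᵀ((Q_k−H)u_k)/(u_kᵀ(Q_k−H)u_k) ≥ 0. -/

import Mathlib

open Matrix

/-- The SR1 (symmetric rank-one) update. -/
noncomputable def SR1 {d : ℕ} (Q H : Matrix (Fin d) (Fin d) ℝ) (u : Fin d → ℝ) :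
    Matrix (Fin d) (Fin d) ℝ :=
  Q - (u ⬝ᵥ (Q - H).mulVec u)⁻¹ • vecMulVec ((Q - H).mulVec u) ((Q - H).mulVec u)

namespace SR1Aux

variable {d : ℕ}

lemma vecMulVec_mulVec (v x : Fin d → ℝ) :
    (vecMulVec v v) *ᵥ x = (v ⬝ᵥ x) • v := by
  ext i
  simp [vecMulVec_apply, Matrix.mulVec, dotProduct, Finset.mul_sum, mul_comm, mul_left_comm]

lemma trace_vecMulVec (v : Fin d → ℝ) : (vecMulVec v v).trace = v ⬝ᵥ v := by
  simp [Matrix.trace, Matrix.diag, vecMulVec_apply, dotProduct]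

lemma pos_of_ne_zero {A : Matrix (Fin d) (Fin d) ℝ} (hA : A.PosSemidef)
    {u : Fin d → ℝ} (hu : A *ᵥ u ≠ 0) : 0 < u ⬝ᵥ A *ᵥ u := by
  rcases lt_or_eq_of_le (by simpa using hA.dotProduct_mulVec_nonneg u) with h | h
  · exact h
  · exfalso; apply hu
    rw [← hA.dotProduct_mulVec_zero_iff u]
    simpa using h.symm

lemma symm_dot {A : Matrix (Fin d) (Fin d) ℝ} (hA : A.IsHermitian) (x y : Fin d → ℝ) :
    x ⬝ᵥ A *ᵥ y = y ⬝ᵥ A *ᵥ x := by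
  have h : Aᵀ = A := by simpa [Matrix.IsHermitian] using hA
  rw [Matrix.dotProduct_mulVec, ← Matrix.mulVec_transpose, h, dotProduct_comm]

lemma cauchy_schwarz {A : Matrix (Fin d) (Fin d) ℝ} (hA : A.PosSemidef)
    (x u : Fin d → ℝ) :
    (x ⬝ᵥ A *ᵥ u) ^ 2 ≤ (x ⬝ᵥ A *ᵥ x) * (u ⬝ᵥ A *ᵥ u) := by
  have hq : ∀ t : ℝ,
      0 ≤ (u ⬝ᵥ A *ᵥ u) * (t * t) + (2 * (x ⬝ᵥ A *ᵥ u)) * t + (x ⬝ᵥ A *ᵥ x) := by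
    intro t
    have h := hA.dotProduct_mulVec_nonneg (x + t • u)
    have hs := symm_dot hA.1 u x
    simp only [Matrix.mulVec_add, Matrix.mulVec_smul, dotProduct_add, add_dotProduct,
      smul_dotProduct, dotProduct_smul, smul_eq_mul, star_trivial] at h
    rw [hs] at h
    nlinarith [h]
  have hd := discrim_le_zero hq
  rw [discrim] at hd
  nlinarith [hd]

lemma sr1_posSemidef {A : Matrix (Fin d) (Fin d) ℝ} (hA : A.PosSemidef)
    {u : Fin d → ℝ} (hu : A *ᵥ u ≠ 0) :
    (A - (u ⬝ᵥ A *ᵥ u)⁻¹ • vecMulVec (A *ᵥ u) (A *ᵥ u)).PosSemidef := by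
  have hc : 0 < u ⬝ᵥ A *ᵥ u := pos_of_ne_zero hA hu
  refine Matrix.PosSemidef.of_dotProduct_mulVec_nonneg ?_ ?_
  · ext i j
    simp only [Matrix.sub_apply, Matrix.conjTranspose_apply, Matrix.smul_apply,
      vecMulVec_apply, star_trivial, smul_eq_mul]
    rw [← hA.1.apply j i]
    simp [mul_comm]
  · intro x
    simp only [Matrix.sub_mulVec, Matrix.smul_mulVec, dotProduct_sub,
      dotProduct_smul, smul_eq_mul, star_trivial, vecMulVec_mulVec,
      dotProduct_smul]
    have hcs := cauchy_schwarz hA x u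
    have hxv : (A *ᵥ u) ⬝ᵥ x = x ⬝ᵥ A *ᵥ u := dotProduct_comm _ _
    rw [hxv, sub_nonneg, inv_mul_le_iff₀ hc]
    nlinarith [hcs]

end SR1Aux

/-- tr(Q_k − H) is a nonincreasing potential for SR1 iterations, and each
SR1 step decreases it by λ = ‖(Q_k−H)u_k‖²/(u_kᵀ(Q_k−H)u_k) ≥ 0. -/
theorem sr1_trace_potential {d : ℕ} (H : Matrix (Fin d) (Fin d) ℝ) (hH : H.PosDef)
    (Q : ℕ → Matrix (Fin d) (Fin d) ℝ) (u : ℕ → (Fin d → ℝ))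
    (hQ0 : (Q 0 - H).PosSemidef)
    (hstep : ∀ k : ℕ,
      (Q k = H → Q (k + 1) = Q k) ∧
      (Q k ≠ H →
        (Q k - H).mulVec (u k) ≠ 0 ∧ Q (k + 1) = SR1 (Q k) H (u k))) :
    (∀ k : ℕ, (Q (k + 1) - H).trace ≤ (Q k - H).trace) ∧
    (∀ k : ℕ, Q k ≠ H →
      0 ≤ ((Q k - H).mulVec (u k) ⬝ᵥ (Q k - H).mulVec (u k)) /
            (u k ⬝ᵥ (Q k - H).mulVec (u k)) ∧
      (Q (k + 1) - H).trace ≤ (Q k - H).trace -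
        ((Q k - H).mulVec (u k) ⬝ᵥ (Q k - H).mulVec (u k)) /
          (u k ⬝ᵥ (Q k - H).mulVec (u k))) := by
  -- All iterates stay PSD
  have hPSD : ∀ k, (Q k - H).PosSemidef := by
    intro k
    induction k with
    | zero => exact hQ0
    | succ n ih =>
      by_cases h : Q n = H
      · rw [(hstep n).1 h]; exact ih
      · obtain ⟨hu, heq⟩ := (hstep n).2 h
        rw [heq, SR1, sub_right_comm]
        exact SR1Aux.sr1_posSemidef ih hu
  have key : ∀ k, Q k ≠ H →
      0 ≤ ((Q k - H).mulVec (u k) ⬝ᵥ (Q k - H).mulVec (u k)) /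
            (u k ⬝ᵥ (Q k - H).mulVec (u k)) ∧
      (Q (k + 1) - H).trace = (Q k - H).trace -
        ((Q k - H).mulVec (u k) ⬝ᵥ (Q k - H).mulVec (u k)) /
          (u k ⬝ᵥ (Q k - H).mulVec (u k)) := by
    intro k h
    obtain ⟨hu, heq⟩ := (hstep k).2 h
    have hc : 0 < u k ⬝ᵥ (Q k - H) *ᵥ (u k) := SR1Aux.pos_of_ne_zero (hPSD k) hu
    constructor
    · exact div_nonneg (Finset.sum_nonneg fun i _ => mul_self_nonneg _) hc.le
    · rw [heq, SR1, sub_right_comm, Matrix.trace_sub, Matrix.trace_smul,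
        SR1Aux.trace_vecMulVec, smul_eq_mul, div_eq_inv_mul]
  refine ⟨fun k => ?_, fun k h => ⟨(key k h).1, ((key k h).2).le⟩⟩
  by_cases h : Q k = H
  · rw [(hstep k).1 h]
  · obtain ⟨h0, h1⟩ := key k h
    rw [h1]; linarith
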